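/- Let f : V → W be a linear map of finite-dimensional real vector spaces and L ⊆ W × W* a Lagrangian subspace. Then the pullback f*L := {(v, α∘f) ∈ V × V* : v ∈ V, α ∈ W*, (f(v), α) ∈ L} is a Lagrangian subspace of V × V*. (Linear-algebra form of the pullback of Dirac structures.) -/

import Mathlib

/-- A subspace `L ⊆ V × V*` is Lagrangian if it equals its orthogonal
complement with respect to the symmetric pairing
`⟨(v,α),(w,β)⟩ = α(w) + β(v)`. -/
def IsLagrangian {V : Type*} [AddCommGroup V] [Module ℝ V]
    (L : Submodule ℝ (V × Module.Dual ℝ V)) : Prop :=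
  ∀ x : V × Module.Dual ℝ V, x ∈ L ↔ ∀ y ∈ L, x.2 y.1 + y.2 x.1 = 0

/-- The musical equivalence `W × W* ≃ (W × W*)*` induced by the pairing. -/
noncomputable def pairingEquiv (W : Type*) [AddCommGroup W] [Module ℝ W]
    [FiniteDimensional ℝ W] :
    (W × Module.Dual ℝ W) ≃ₗ[ℝ] Module.Dual ℝ (W × Module.Dual ℝ W) :=
  (LinearEquiv.prodComm ℝ W (Module.Dual ℝ W)).trans <|
    ((LinearEquiv.refl ℝ (Module.Dual ℝ W)).prodCongr (Module.evalEquiv ℝ W)).trans <|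
      Module.dualProdDualEquivDual ℝ W (Module.Dual ℝ W)

lemma pairingEquiv_apply {W : Type*} [AddCommGroup W] [Module ℝ W]
    [FiniteDimensional ℝ W] (x y : W × Module.Dual ℝ W) :
    pairingEquiv W x y = x.2 y.1 + y.2 x.1 := by
  rfl

/-- The pullback `f*L = {(v, α∘f) : (f v, α) ∈ L}` of a Lagrangian subspace
`L ⊆ W × W*` along a linear map `f : V → W` is a Lagrangian subspace of
`V × V*`: it coincides with its orthogonal complement for the pairing. -/
theorem pullback_of_lagrangian_is_lagrangian
    {V W : Type*} [AddCommGroup V] [Module ℝ V] [FiniteDimensional ℝ V]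
    [AddCommGroup W] [Module ℝ W] [FiniteDimensional ℝ W]
    (f : V →ₗ[ℝ] W)
    (L : Submodule ℝ (W × Module.Dual ℝ W)) (hL : IsLagrangian L) :
    ∀ x : V × Module.Dual ℝ V,
      (∃ α : Module.Dual ℝ W, (f x.1, α) ∈ L ∧ x.2 = α ∘ₗ f) ↔
      ∀ y : V × Module.Dual ℝ V,
        (∃ α : Module.Dual ℝ W, (f y.1, α) ∈ L ∧ y.2 = α ∘ₗ f) →
        x.2 y.1 + y.2 x.1 = 0 := by
  intro x
  constructor
  · rintro ⟨α, hα, hx2⟩ y ⟨β, hβ, hy2⟩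
    have := (hL (f x.1, α)).mp hα (f y.1, β) hβ
    simp only [hx2, hy2, LinearMap.comp_apply]
    simpa using this
  · obtain ⟨v, ξ⟩ := x
    intro h
    simp only at h ⊢
    -- `ξ` kills `ker f`
    have hker : LinearMap.ker f ≤ LinearMap.ker ξ := by
      intro w hw
      have := h (w, 0) ⟨0, by
        simp [LinearMap.mem_ker.mp hw]; exact L.zero_mem, by ext; simp⟩
      simpa using this
    -- factor `ξ = η ∘ f`
    let ξ' : (V ⧸ LinearMap.ker f) →ₗ[ℝ] ℝ := (LinearMap.ker f).liftQ ξ hker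
    let η₀ : LinearMap.range f →ₗ[ℝ] ℝ :=
      ξ' ∘ₗ (f.quotKerEquivRange.symm : LinearMap.range f →ₗ[ℝ] V ⧸ LinearMap.ker f)
    obtain ⟨η, hη⟩ := η₀.exists_extend
    have hηf : ∀ u : V, η (f u) = ξ u := by
      intro u
      have h1 : η (f u) = η₀ ⟨f u, LinearMap.mem_range_self f u⟩ := by
        rw [← hη]; rfl
      rw [h1]
      show ξ' (f.quotKerEquivRange.symm ⟨f u, _⟩) = ξ u
      rw [f.quotKerEquivRange_symm_apply_image]
      rfl
    -- the "range" coisotropic subspace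
    set R : Submodule ℝ (W × Module.Dual ℝ W) := (LinearMap.range f).prod ⊤ with hR
    set Φ := pairingEquiv W
    have hmem : Φ (f v, η) ∈ (L ⊓ R).dualAnnihilator := by
      rw [Submodule.mem_dualAnnihilator]
      rintro ⟨w, β⟩ ⟨hwL, hwR⟩
      obtain ⟨u, rfl⟩ := (Submodule.mem_prod.mp hwR).1
      have := h (u, β ∘ₗ f) ⟨β, hwL, rfl⟩
      rw [pairingEquiv_apply]
      simpa [hηf] using this
    rw [Subspace.dualAnnihilator_inf_eq, Submodule.mem_sup] at hmem
    obtain ⟨φ, hφ, ψ, hψ, hsum⟩ := hmem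
    set a := Φ.symm φ with ha
    set b := Φ.symm ψ with hb
    have hab : (f v, η) = a + b := by
      apply Φ.injective
      rw [map_add, ha, hb, Φ.apply_symm_apply, Φ.apply_symm_apply, hsum]
    have haL : a ∈ L := by
      rw [hL a]
      intro y hy
      have : Φ a y = 0 := by
        rw [ha, Φ.apply_symm_apply]
        exact (Submodule.mem_dualAnnihilator φ).mp hφ y hy
      rwa [pairingEquiv_apply] at this
    have hbR : ∀ z ∈ R, Φ b z = 0 := by
      intro z hz
      rw [hb, Φ.apply_symm_apply]
      exact (Submodule.mem_dualAnnihilator ψ).mp hψ z hz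
    have hb1 : b.1 = 0 := by
      rw [← Module.forall_dual_apply_eq_zero_iff ℝ b.1]
      intro β
      have := hbR (0, β) ⟨Submodule.zero_mem _, trivial⟩
      rw [pairingEquiv_apply] at this
      simpa using this
    have hb2 : ∀ u : V, b.2 (f u) = 0 := by
      intro u
      have := hbR (f u, 0) ⟨LinearMap.mem_range_self f u, trivial⟩
      rw [pairingEquiv_apply] at this
      simpa using this
    have hfv : f v = a.1 := by
      have := congrArg Prod.fst hab
      simpa [hb1] using this
    have hη2 : η = a.2 + b.2 := congrArg Prod.snd hab
    refine ⟨a.2, ?_, ?_⟩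
    · rw [hfv]; exact haL
    · ext u
      have := hηf u
      rw [hη2] at this
      simpa [hb2 u] using this.symm
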